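/- arXiv:1312.2606 — 2 statements merged into one kernel-verified Lean document; each statement's English description precedes it below -/
import Mathlib

section
/- Let H be a real inner product space, let T be a positive integer, let s ≥ 1 and R > 0, and let w_1,…,w_T ∈ H. Then the following are equivalent: (i) there exists λ ∈ ℝ^T with λ_t ≥ 0 for all t, Σ_{t=1}^T λ_t^s ≤ 1, and ‖w_t‖² ≤ λ_t² R for all t; (ii) (Σ_{t=1}^T ‖w_t‖^s)^{2/s} ≤ R. Consequently, the hypothesis space F_s coincides with the Group-Lasso-type hypothesis space F_s^{GL} = {(w_1,…,w_T) ∈ H^T : (Σ_{t=1}^T ‖w_t‖^s)^{2/s} ≤ R}. -/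
open scoped BigOperators

noncomputable section

theorem key (H : Type*) [NormedAddCommGroup H] [InnerProductSpace ℝ H]
    (T : ℕ) (s R : ℝ) (hs : 1 ≤ s) (hR : 0 < R) (w : Fin T → H) :
    ((∃ lam : Fin T → ℝ, (∀ t, 0 ≤ lam t) ∧ (∑ t, lam t ^ s) ≤ 1 ∧
          ∀ t, ‖w t‖ ^ 2 ≤ lam t ^ 2 * R) ↔
        (∑ t, ‖w t‖ ^ s) ^ (2 / s) ≤ R) := by
  have hs0 : (0:ℝ) < s := lt_of_lt_of_le one_pos hs
  have hsqrt : (0:ℝ) < Real.sqrt R := Real.sqrt_pos.mpr hR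
  have hsq : Real.sqrt R ^ (2:ℕ) = R := Real.sq_sqrt hR.le
  constructor
  · rintro ⟨lam, hnn, hsum, hle⟩
    have hle' : ∀ t, ‖w t‖ ≤ lam t * Real.sqrt R := by
      intro t
      have h := Real.sqrt_le_sqrt (hle t)
      rwa [Real.sqrt_sq (norm_nonneg _), Real.sqrt_mul (sq_nonneg _) R,
        Real.sqrt_sq (hnn t)] at h
    have h1 : (∑ t, ‖w t‖ ^ s) ≤ Real.sqrt R ^ s := by
      calc (∑ t, ‖w t‖ ^ s) ≤ ∑ t, (lam t * Real.sqrt R) ^ s := by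
            apply Finset.sum_le_sum
            intro t _
            exact Real.rpow_le_rpow (norm_nonneg _) (hle' t) hs0.le
        _ = ∑ t, lam t ^ s * Real.sqrt R ^ s :=
            Finset.sum_congr rfl fun t _ => Real.mul_rpow (hnn t) hsqrt.le
        _ = (∑ t, lam t ^ s) * Real.sqrt R ^ s := (Finset.sum_mul _ _ _).symm
        _ ≤ Real.sqrt R ^ s := by
            have h2 : (0:ℝ) ≤ Real.sqrt R ^ s := Real.rpow_nonneg hsqrt.le s
            nlinarith
    have h2 : (∑ t, ‖w t‖ ^ s) ^ (2 / s) ≤ (Real.sqrt R ^ s) ^ (2 / s) := by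
      apply Real.rpow_le_rpow _ h1 (by positivity)
      exact Finset.sum_nonneg fun t _ => Real.rpow_nonneg (norm_nonneg _) s
    calc (∑ t, ‖w t‖ ^ s) ^ (2 / s) ≤ (Real.sqrt R ^ s) ^ (2 / s) := h2
      _ = Real.sqrt R ^ (s * (2 / s)) := (Real.rpow_mul hsqrt.le s (2/s)).symm
      _ = Real.sqrt R ^ (2:ℝ) := by rw [mul_div_cancel₀ _ hs0.ne']
      _ = R := by
          rw [show (2:ℝ) = ((2:ℕ):ℝ) by norm_num, Real.rpow_natCast]; exact hsq
  · intro h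
    refine ⟨fun t => ‖w t‖ / Real.sqrt R, fun t => by positivity, ?_, ?_⟩
    · have hA : (0:ℝ) ≤ ∑ t, ‖w t‖ ^ s :=
        Finset.sum_nonneg fun t _ => Real.rpow_nonneg (norm_nonneg _) s
      have h1 : (∑ t, ‖w t‖ ^ s) ≤ R ^ (s / 2) := by
        have h3 := Real.rpow_le_rpow (Real.rpow_nonneg hA _) h
          (le_of_lt (by positivity : (0:ℝ) < s/2))
        rwa [← Real.rpow_mul hA, div_mul_div_comm, mul_comm s 2,
          div_self (by positivity : (2*s:ℝ) ≠ 0), Real.rpow_one] at h3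
      have hR2 : Real.sqrt R ^ s = R ^ (s/2) := by
        rw [Real.sqrt_eq_rpow, ← Real.rpow_mul hR.le, one_div, inv_mul_eq_div]
      calc (∑ t, (‖w t‖ / Real.sqrt R) ^ s)
          = ∑ t, ‖w t‖ ^ s / Real.sqrt R ^ s :=
            Finset.sum_congr rfl fun t _ => Real.div_rpow (norm_nonneg _) hsqrt.le _
        _ = (∑ t, ‖w t‖ ^ s) / Real.sqrt R ^ s := (Finset.sum_div _ _ _).symm
        _ ≤ 1 := by
            rw [div_le_one (by rw [hR2]; positivity), hR2]; exact h1
    · intro t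
      rw [div_pow, div_mul_eq_mul_div, hsq, mul_div_assoc, div_self hR.ne', mul_one]


/-- The hypothesis class `F_s`: tuples `(w_1,…,w_T)` such that there is `λ ⪰ 0` with
`‖λ‖_s ≤ 1` and `‖w_t‖² ≤ λ_t² R` for all `t`. -/
def Fs (H : Type*) [NormedAddCommGroup H] [InnerProductSpace ℝ H]
    (T : ℕ) (s R : ℝ) : Set (Fin T → H) :=
  {w | ∃ lam : Fin T → ℝ, (∀ t, 0 ≤ lam t) ∧ (∑ t, lam t ^ s) ≤ 1 ∧
    ∀ t, ‖w t‖ ^ 2 ≤ lam t ^ 2 * R}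

/-- The Group-Lasso-type hypothesis class `F_s^{GL} = {w : (Σ_t ‖w_t‖^s)^{2/s} ≤ R}`. -/
def FsGL (H : Type*) [NormedAddCommGroup H] [InnerProductSpace ℝ H]
    (T : ℕ) (s R : ℝ) : Set (Fin T → H) :=
  {w | (∑ t, ‖w t‖ ^ s) ^ (2 / s) ≤ R}

/-- For `s ≥ 1` and `R > 0`, membership in `F_s` (existence of a
suitable `λ`) is equivalent to the Group-Lasso constraint `(Σ_t ‖w_t‖^s)^{2/s} ≤ R`;
consequently `F_s = F_s^{GL}`. -/
theorem Fs_eq_FsGL (H : Type*) [NormedAddCommGroup H] [InnerProductSpace ℝ H]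
    (T : ℕ) (hT : 0 < T) (s R : ℝ) (hs : 1 ≤ s) (hR : 0 < R) :
    (∀ w : Fin T → H,
      ((∃ lam : Fin T → ℝ, (∀ t, 0 ≤ lam t) ∧ (∑ t, lam t ^ s) ≤ 1 ∧
          ∀ t, ‖w t‖ ^ 2 ≤ lam t ^ 2 * R) ↔
        (∑ t, ‖w t‖ ^ s) ^ (2 / s) ≤ R)) ∧
      Fs H T s R = FsGL H T s R := by
  refine ⟨fun w => key H T s R hs hR w, ?_⟩
  ext w
  simp only [Fs, FsGL, Set.mem_setOf_eq]
  exact key H T s R hs hR w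

end
end

section
/- Let H be a real inner product space, let x_1,…,x_n ∈ H, let p ≥ 1, and let σ_1,…,σ_n be i.i.d. Rademacher random variables (uniform on {−1,+1}). Then E_σ[ ‖Σ_{i=1}^n σ_i x_i‖^p ] ≤ ( p · Σ_{i=1}^n ‖x_i‖² )^{p/2}. -/
open scoped BigOperators
open Finset

noncomputable section

/-- The sign `+1`/`-1` associated with a Boolean, used to realize Rademacher variables. -/
def sgn (b : Bool) : ℝ := if b then 1 else -1

/-- Expectation over i.i.d. Rademacher variables `σ_1,…,σ_n`, realized as the uniform
average over all `2^n` sign patterns. -/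
def Erad (n : ℕ) (f : (Fin n → Bool) → ℝ) : ℝ :=
  (∑ σ : Fin n → Bool, f σ) / (Fintype.card (Fin n → Bool) : ℝ)

lemma sgn_not (b : Bool) : sgn (!b) = - sgn b := by cases b <;> simp [sgn]

@[simp] lemma sgn_true : sgn true = 1 := rfl

@[simp] lemma sgn_false : sgn false = -1 := rfl

/-- Rearrangement inequality: `a^i b^j + a^j b^i ≤ a^(i+j) + b^(i+j)`. -/
lemma rearr {a b : ℝ} (ha : 0 ≤ a) (hb : 0 ≤ b) (i j : ℕ) :
    a ^ i * b ^ j + a ^ j * b ^ i ≤ a ^ (i + j) + b ^ (i + j) := by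
  have key : 0 ≤ (a ^ i - b ^ i) * (a ^ j - b ^ j) := by
    rcases le_total a b with h | h
    · nlinarith [pow_le_pow_left₀ ha h i, pow_le_pow_left₀ ha h j]
    · nlinarith [pow_le_pow_left₀ hb h i, pow_le_pow_left₀ hb h j]
  have hexp : (a ^ i - b ^ i) * (a ^ j - b ^ j)
      = a ^ (i + j) + b ^ (i + j) - (a ^ i * b ^ j + a ^ j * b ^ i) := by
    rw [pow_add, pow_add]; ring
  linarith [hexp ▸ key]

/-- Key scalar inequality: `2 (s-t)(s^{c+1} - t^{c+1}) ≤ (c+1)(s-t)^2 (s^c + t^c)`. -/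
lemma geomE {s t : ℝ} (hs : 0 ≤ s) (ht : 0 ≤ t) (c : ℕ) :
    2 * ((s - t) * (s ^ (c + 1) - t ^ (c + 1)))
      ≤ ((c : ℝ) + 1) * (s - t) ^ 2 * (s ^ c + t ^ c) := by
  have hg : (∑ i ∈ range (c + 1), s ^ i * t ^ (c - i)) * (s - t)
      = s ^ (c + 1) - t ^ (c + 1) := by
    simpa using geom_sum₂_mul s t (c + 1)
  have hrefl : (∑ i ∈ range (c + 1), s ^ (c - i) * t ^ (c - (c - i)))
      = ∑ i ∈ range (c + 1), s ^ i * t ^ (c - i) := by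
    simpa using Finset.sum_range_reflect (fun i => s ^ i * t ^ (c - i)) (c + 1)
  have h2G : 2 * (∑ i ∈ range (c + 1), s ^ i * t ^ (c - i))
      ≤ ((c : ℝ) + 1) * (s ^ c + t ^ c) := by
    have hsum : 2 * (∑ i ∈ range (c + 1), s ^ i * t ^ (c - i))
        = ∑ i ∈ range (c + 1), (s ^ i * t ^ (c - i) + s ^ (c - i) * t ^ (c - (c - i))) := by
      rw [Finset.sum_add_distrib, hrefl]; ring
    rw [hsum]
    calc ∑ i ∈ range (c + 1), (s ^ i * t ^ (c - i) + s ^ (c - i) * t ^ (c - (c - i)))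
        ≤ ∑ _i ∈ range (c + 1), (s ^ c + t ^ c) := by
          refine Finset.sum_le_sum fun i hi => ?_
          have hi' : i ≤ c := Nat.lt_succ_iff.mp (Finset.mem_range.mp hi)
          have h1 : c - (c - i) = i := Nat.sub_sub_self hi'
          have h2 : i + (c - i) = c := Nat.add_sub_cancel' hi'
          calc s ^ i * t ^ (c - i) + s ^ (c - i) * t ^ (c - (c - i))
              = s ^ i * t ^ (c - i) + s ^ (c - i) * t ^ i := by rw [h1]
            _ ≤ s ^ (i + (c - i)) + t ^ (i + (c - i)) := rearr hs ht i (c - i)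
            _ = s ^ c + t ^ c := by rw [h2]
      _ = ((c : ℝ) + 1) * (s ^ c + t ^ c) := by
          rw [Finset.sum_const, Finset.card_range, nsmul_eq_mul]; push_cast; ring
  calc 2 * ((s - t) * (s ^ (c + 1) - t ^ (c + 1)))
      = (s - t) ^ 2 * (2 * (∑ i ∈ range (c + 1), s ^ i * t ^ (c - i))) := by
        rw [← hg]; ring
    _ ≤ (s - t) ^ 2 * (((c : ℝ) + 1) * (s ^ c + t ^ c)) :=
        mul_le_mul_of_nonneg_left h2G (sq_nonneg _)
    _ = ((c : ℝ) + 1) * (s - t) ^ 2 * (s ^ c + t ^ c) := by ring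

/-- Vector two-point inequality used in the discrete integration by parts. -/
lemma two_point {H : Type*} [NormedAddCommGroup H] [InnerProductSpace ℝ H]
    {u v y : H} (h : u - v = (2 : ℝ) • y) (c : ℕ) :
    (inner ℝ y u : ℝ) * ‖u‖ ^ (2 * c) - (inner ℝ y v : ℝ) * ‖v‖ ^ (2 * c)
      ≤ (2 * (c : ℝ) + 1) * ‖y‖ ^ 2 * (‖u‖ ^ (2 * c) + ‖v‖ ^ (2 * c)) := by
  have hsu : (0 : ℝ) ≤ ‖u‖ := norm_nonneg _
  have hsv : (0 : ℝ) ≤ ‖v‖ := norm_nonneg _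
  have hcs : (inner ℝ u v : ℝ) ≤ ‖u‖ * ‖v‖ := real_inner_le_norm u v
  have h1 : (2 : ℝ) * (inner ℝ y u : ℝ) = ‖u‖ ^ 2 - (inner ℝ u v : ℝ) := by
    have h1' : (inner ℝ (u - v) u : ℝ) = (2 : ℝ) * (inner ℝ y u : ℝ) := by
      rw [h, real_inner_smul_left]
    rw [inner_sub_left, real_inner_self_eq_norm_sq, real_inner_comm u v] at h1'
    linarith
  have h2 : (2 : ℝ) * (inner ℝ y v : ℝ) = (inner ℝ u v : ℝ) - ‖v‖ ^ 2 := by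
    have h2' : (inner ℝ (u - v) v : ℝ) = (2 : ℝ) * (inner ℝ y v : ℝ) := by
      rw [h, real_inner_smul_left]
    rw [inner_sub_left, real_inner_self_eq_norm_sq] at h2'
    linarith
  have h3 : 4 * ‖y‖ ^ 2 = ‖u‖ ^ 2 - 2 * (inner ℝ u v : ℝ) + ‖v‖ ^ 2 := by
    have h3' : ‖u - v‖ ^ 2 = 4 * ‖y‖ ^ 2 := by
      rw [h, norm_smul]
      simp [mul_pow]
      norm_num
    rw [norm_sub_sq_real] at h3'
    linarith
  have key := geomE hsu hsv (2 * c)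
  rw [pow_succ, pow_succ] at key
  have hA : (0 : ℝ) ≤ ‖u‖ ^ (2 * c) := pow_nonneg hsu _
  have hB : (0 : ℝ) ≤ ‖v‖ ^ (2 * c) := pow_nonneg hsv _
  have haux : (0 : ℝ) ≤ (2 * (c : ℝ)) * ((‖u‖ * ‖v‖ - (inner ℝ u v : ℝ))
      * (‖u‖ ^ (2 * c) + ‖v‖ ^ (2 * c))) := by
    apply mul_nonneg (by positivity)
    exact mul_nonneg (sub_nonneg.2 hcs) (add_nonneg hA hB)
  have g1 : (inner ℝ y u : ℝ) = (‖u‖ ^ 2 - (inner ℝ u v : ℝ)) / 2 := by linarith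
  have g2 : (inner ℝ y v : ℝ) = ((inner ℝ u v : ℝ) - ‖v‖ ^ 2) / 2 := by linarith
  have g3 : ‖y‖ ^ 2 = (‖u‖ ^ 2 - 2 * (inner ℝ u v : ℝ) + ‖v‖ ^ 2) / 4 := by linarith
  rw [g1, g2, g3]
  push_cast at key
  nlinarith [key, haux, hA, hB]

/-- Flipping one sign changes the signed sum by `- 2 sgn(σ i) • x i`. -/
lemma flip_sum {H : Type*} [NormedAddCommGroup H] [InnerProductSpace ℝ H]
    {n : ℕ} (x : Fin n → H) (σ : Fin n → Bool) (i : Fin n) :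
    (∑ j, sgn (Function.update σ i (!(σ i)) j) • x j)
      = (∑ j, sgn (σ j) • x j) - (2 * sgn (σ i)) • x i := by
  have hterm : ∀ j, sgn (Function.update σ i (!(σ i)) j) • x j
      = sgn (σ j) • x j - (if j = i then (2 * sgn (σ i)) • x i else 0) := by
    intro j
    rcases eq_or_ne j i with rfl | hj
    · rw [Function.update_self, sgn_not, if_pos rfl, ← sub_smul]
      congr 1
      ring
    · rw [Function.update_of_ne hj, if_neg hj, sub_zero]
  rw [Finset.sum_congr rfl (fun j _ => hterm j), Finset.sum_sub_distrib]
  congr 1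
  simp

/-- Discrete integration-by-parts recursion for the even moments. -/
lemma step_sum {H : Type*} [NormedAddCommGroup H] [InnerProductSpace ℝ H]
    {n : ℕ} (x : Fin n → H) (c : ℕ) :
    ∑ σ : Fin n → Bool, ‖∑ i, sgn (σ i) • x i‖ ^ (2 * c + 2)
      ≤ (2 * (c : ℝ) + 1) * (∑ i, ‖x i‖ ^ 2)
          * ∑ σ : Fin n → Bool, ‖∑ i, sgn (σ i) • x i‖ ^ (2 * c) := by
  classical
  set F : (Fin n → Bool) → H := fun σ => ∑ i, sgn (σ i) • x i with hF
  have hswap : ∑ σ : Fin n → Bool, ‖F σ‖ ^ (2 * c + 2)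
      = ∑ i, ∑ σ : Fin n → Bool, sgn (σ i) * ((inner ℝ (x i) (F σ) : ℝ) * ‖F σ‖ ^ (2 * c)) := by
    rw [Finset.sum_comm]
    refine Finset.sum_congr rfl fun σ _ => ?_
    have h1 : ‖F σ‖ ^ (2 * c + 2) = (inner ℝ (F σ) (F σ) : ℝ) * ‖F σ‖ ^ (2 * c) := by
      rw [real_inner_self_eq_norm_sq, ← pow_add]
      congr 1
      ring
    have h2 : (inner ℝ (F σ) (F σ) : ℝ) = ∑ i, sgn (σ i) * (inner ℝ (x i) (F σ) : ℝ) := by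
      rw [hF]
      rw [sum_inner]
      exact Finset.sum_congr rfl fun i _ => real_inner_smul_left _ _ _
    rw [h1, h2, Finset.sum_mul]
    exact Finset.sum_congr rfl fun i _ => by ring
  rw [hswap]
  have keyi : ∀ i : Fin n,
      (∑ σ : Fin n → Bool, sgn (σ i) * ((inner ℝ (x i) (F σ) : ℝ) * ‖F σ‖ ^ (2 * c)))
        ≤ (2 * (c : ℝ) + 1) * ‖x i‖ ^ 2 * ∑ σ : Fin n → Bool, ‖F σ‖ ^ (2 * c) := by
    intro i
    have hinv : Function.Involutive
        (fun σ : Fin n → Bool => Function.update σ i (!(σ i))) := by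
      intro σ
      funext j
      rcases eq_or_ne j i with rfl | hj
      · simp [Function.update_self]
      · simp [Function.update_of_ne hj]
    set e : Equiv.Perm (Fin n → Bool) := hinv.toPerm _ with he
    have hecoe : ∀ σ : Fin n → Bool, e σ = Function.update σ i (!(σ i)) := fun σ => rfl
    set A : (Fin n → Bool) → ℝ :=
      fun σ => sgn (σ i) * ((inner ℝ (x i) (F σ) : ℝ) * ‖F σ‖ ^ (2 * c)) with hA
    have hsum_e : ∀ g : (Fin n → Bool) → ℝ, ∑ σ, g (e σ) = ∑ σ, g σ :=
      fun g => Equiv.sum_comp e g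
    have hflipF : ∀ σ : Fin n → Bool, F (e σ) = F σ - (2 * sgn (σ i)) • x i := by
      intro σ
      rw [hecoe]
      exact flip_sum x σ i
    have hbound : ∀ σ : Fin n → Bool,
        A σ + A (e σ) ≤ (2 * (c : ℝ) + 1) * ‖x i‖ ^ 2
          * (‖F σ‖ ^ (2 * c) + ‖F (e σ)‖ ^ (2 * c)) := by
      intro σ
      have hAσ : A σ = sgn (σ i) * ((inner ℝ (x i) (F σ) : ℝ) * ‖F σ‖ ^ (2 * c)) := rfl
      have hAe : A (e σ) = - sgn (σ i) * ((inner ℝ (x i) (F (e σ)) : ℝ) * ‖F (e σ)‖ ^ (2 * c)) := by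
        have h' : (e σ) i = !(σ i) := by rw [hecoe σ]; exact Function.update_self i _ σ
        show sgn ((e σ) i) * ((inner ℝ (x i) (F (e σ)) : ℝ) * ‖F (e σ)‖ ^ (2 * c)) = _
        rw [h', sgn_not]
      rw [hAσ, hAe]
      cases hσ : σ i with
      | true =>
        have hd : F σ - F (e σ) = (2 : ℝ) • x i := by
          rw [hflipF σ, hσ]
          simp [sgn]
        have key := two_point (u := F σ) (v := F (e σ)) (y := x i) hd c
        rw [sgn_true]
        linarith [key]
      | false =>
        have hd : F (e σ) - F σ = (2 : ℝ) • x i := by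
          rw [hflipF σ, hσ]
          simp [sgn]
        have key := two_point (u := F (e σ)) (v := F σ) (y := x i) hd c
        rw [sgn_false]
        linarith [key]
    have h2T : 2 * (∑ σ : Fin n → Bool, A σ)
        ≤ (2 * (c : ℝ) + 1) * ‖x i‖ ^ 2 * (2 * ∑ σ : Fin n → Bool, ‖F σ‖ ^ (2 * c)) := by
      have hT2 : 2 * (∑ σ : Fin n → Bool, A σ)
          = ∑ σ : Fin n → Bool, (A σ + A (e σ)) := by
        rw [Finset.sum_add_distrib, hsum_e A]; ring
      rw [hT2]
      calc ∑ σ : Fin n → Bool, (A σ + A (e σ))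
          ≤ ∑ σ : Fin n → Bool, (2 * (c : ℝ) + 1) * ‖x i‖ ^ 2
              * (‖F σ‖ ^ (2 * c) + ‖F (e σ)‖ ^ (2 * c)) :=
            Finset.sum_le_sum fun σ _ => hbound σ
        _ = (2 * (c : ℝ) + 1) * ‖x i‖ ^ 2 * (2 * ∑ σ : Fin n → Bool, ‖F σ‖ ^ (2 * c)) := by
            rw [← Finset.mul_sum, Finset.sum_add_distrib,
              hsum_e (fun σ => ‖F σ‖ ^ (2 * c))]
            ring
    linarith
  calc ∑ i, ∑ σ : Fin n → Bool, sgn (σ i) * ((inner ℝ (x i) (F σ) : ℝ) * ‖F σ‖ ^ (2 * c))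
      ≤ ∑ i, (2 * (c : ℝ) + 1) * ‖x i‖ ^ 2 * ∑ σ : Fin n → Bool, ‖F σ‖ ^ (2 * c) :=
        Finset.sum_le_sum fun i _ => keyi i
    _ = (2 * (c : ℝ) + 1) * (∑ i, ‖x i‖ ^ 2) * ∑ σ : Fin n → Bool, ‖F σ‖ ^ (2 * c) := by
        rw [← Finset.sum_mul, ← Finset.mul_sum]

/-- Even moments bound: `∑_σ ‖F σ‖^{2m} ≤ (2m-1)!! S^m 2^n`. -/
lemma moments {H : Type*} [NormedAddCommGroup H] [InnerProductSpace ℝ H]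
    {n : ℕ} (x : Fin n → H) (m : ℕ) :
    ∑ σ : Fin n → Bool, ‖∑ i, sgn (σ i) • x i‖ ^ (2 * m)
      ≤ (∏ j ∈ range m, (2 * (j : ℝ) + 1)) * (∑ i, ‖x i‖ ^ 2) ^ m * 2 ^ n := by
  classical
  induction m with
  | zero =>
    simp [Finset.card_univ]
  | succ m ih =>
    have hS : (0 : ℝ) ≤ ∑ i, ‖x i‖ ^ 2 := by positivity
    have h1 : 2 * (m + 1) = 2 * m + 2 := by ring
    rw [h1]
    calc ∑ σ : Fin n → Bool, ‖∑ i, sgn (σ i) • x i‖ ^ (2 * m + 2)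
        ≤ (2 * (m : ℝ) + 1) * (∑ i, ‖x i‖ ^ 2)
            * ∑ σ : Fin n → Bool, ‖∑ i, sgn (σ i) • x i‖ ^ (2 * m) := step_sum x m
      _ ≤ (2 * (m : ℝ) + 1) * (∑ i, ‖x i‖ ^ 2)
            * ((∏ j ∈ range m, (2 * (j : ℝ) + 1)) * (∑ i, ‖x i‖ ^ 2) ^ m * 2 ^ n) := by
          apply mul_le_mul_of_nonneg_left ih (by positivity)
      _ = (∏ j ∈ range (m + 1), (2 * (j : ℝ) + 1)) * (∑ i, ‖x i‖ ^ 2) ^ (m + 1) * 2 ^ n := by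
          rw [Finset.prod_range_succ]
          push_cast
          ring

/-- `(2m-1)!! ≤ (2m-2)^m` for `m ≥ 2`. -/
lemma dfact_le (m : ℕ) (hm : 2 ≤ m) :
    (∏ j ∈ range m, (2 * (j : ℝ) + 1)) ≤ (2 * (m : ℝ) - 2) ^ m := by
  induction m, hm using Nat.le_induction with
  | base => norm_num [Finset.prod_range_succ]
  | succ m hm ih =>
    have hm' : (2 : ℝ) ≤ (m : ℝ) := by exact_mod_cast hm
    have ha : (0 : ℝ) < 2 * (m : ℝ) - 2 := by linarith
    have hb : 2 * (2 * (m : ℝ) - 2) ^ m ≤ (2 * (m : ℝ)) ^ m := by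
      have hber : 1 + (m : ℝ) * (2 / (2 * (m : ℝ) - 2))
          ≤ (1 + 2 / (2 * (m : ℝ) - 2)) ^ m := by
        apply one_add_mul_le_pow
        have : (0 : ℝ) ≤ 2 / (2 * (m : ℝ) - 2) := by positivity
        linarith
      have h3 : (2 : ℝ) ≤ 1 + (m : ℝ) * (2 / (2 * (m : ℝ) - 2)) := by
        have hd : (1 : ℝ) ≤ 2 * (m : ℝ) / (2 * (m : ℝ) - 2) := by
          rw [le_div_iff₀ ha]; linarith
        have : (m : ℝ) * (2 / (2 * (m : ℝ) - 2)) = 2 * (m : ℝ) / (2 * (m : ℝ) - 2) := by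
          ring
        linarith [this ▸ hd]
      calc 2 * (2 * (m : ℝ) - 2) ^ m
          ≤ (1 + (m : ℝ) * (2 / (2 * (m : ℝ) - 2))) * (2 * (m : ℝ) - 2) ^ m :=
            mul_le_mul_of_nonneg_right h3 (pow_nonneg ha.le m)
        _ ≤ (1 + 2 / (2 * (m : ℝ) - 2)) ^ m * (2 * (m : ℝ) - 2) ^ m :=
            mul_le_mul_of_nonneg_right hber (pow_nonneg ha.le m)
        _ = ((1 + 2 / (2 * (m : ℝ) - 2)) * (2 * (m : ℝ) - 2)) ^ m := by rw [← mul_pow]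
        _ = (2 * (m : ℝ)) ^ m := by
            congr 1
            rw [add_mul, div_mul_cancel₀ _ ha.ne']; ring
    have hc : (2 * (m : ℝ) - 2) ^ m * (2 * (m : ℝ) + 1) ≤ (2 * (m : ℝ)) ^ (m + 1) := by
      have hp : (0 : ℝ) ≤ (2 * (m : ℝ) - 2) ^ m := pow_nonneg ha.le m
      have h4 : 2 * (m : ℝ) + 1 ≤ 4 * (m : ℝ) := by linarith
      calc (2 * (m : ℝ) - 2) ^ m * (2 * (m : ℝ) + 1)
          ≤ (2 * (m : ℝ) - 2) ^ m * (4 * (m : ℝ)) :=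
            mul_le_mul_of_nonneg_left h4 hp
        _ = (2 * (m : ℝ)) * (2 * (2 * (m : ℝ) - 2) ^ m) := by ring
        _ ≤ (2 * (m : ℝ)) * (2 * (m : ℝ)) ^ m :=
            mul_le_mul_of_nonneg_left hb (by linarith)
        _ = (2 * (m : ℝ)) ^ (m + 1) := by rw [pow_succ]; ring
    calc (∏ j ∈ range (m + 1), (2 * (j : ℝ) + 1))
        = (∏ j ∈ range m, (2 * (j : ℝ) + 1)) * (2 * (m : ℝ) + 1) := by
          rw [Finset.prod_range_succ]
      _ ≤ (2 * (m : ℝ) - 2) ^ m * (2 * (m : ℝ) + 1) :=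
          mul_le_mul_of_nonneg_right ih (by linarith)
      _ ≤ (2 * (m : ℝ)) ^ (m + 1) := hc
      _ = (2 * (((m + 1 : ℕ)) : ℝ) - 2) ^ (m + 1) := by push_cast; congr 1; ring

/-- `(2m-1)!! ≤ p^m` whenever `1 ≤ p` and `2m ≤ p + 2`. -/
lemma prod_odd_le {m : ℕ} {p : ℝ} (hp : 1 ≤ p) (h2 : 2 * (m : ℝ) ≤ p + 2) :
    (∏ j ∈ range m, (2 * (j : ℝ) + 1)) ≤ p ^ m := by
  match m with
  | 0 => simp
  | 1 => simpa using hp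
  | (m + 2) =>
    have hd := dfact_le (m + 2) (by omega)
    have hle : (2 * (((m + 2 : ℕ)) : ℝ) - 2) ≤ p := by
      have : 2 * (((m + 2 : ℕ)) : ℝ) ≤ p + 2 := h2
      linarith
    have h0 : (0 : ℝ) ≤ 2 * (((m + 2 : ℕ)) : ℝ) - 2 := by
      push_cast
      linarith [Nat.cast_nonneg (α := ℝ) m]
    exact hd.trans (pow_le_pow_left₀ h0 hle _)

lemma Erad_eq (n : ℕ) (g : (Fin n → Bool) → ℝ) :
    Erad n g = ∑ σ : Fin n → Bool, ((Fintype.card (Fin n → Bool) : ℝ))⁻¹ * g σ := by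
  rw [Erad, div_eq_mul_inv, mul_comm, Finset.mul_sum]

/-- (Khintchine–Kahane-type inequality.)  For vectors `x_1,…,x_n` in a
real inner product space, `p ≥ 1`, and i.i.d. Rademacher variables `σ_1,…,σ_n`:
`E_σ ‖Σ_i σ_i x_i‖^p ≤ (p Σ_i ‖x_i‖²)^{p/2}`. -/
theorem rademacher_moment_bound {H : Type*} [NormedAddCommGroup H]
    [InnerProductSpace ℝ H] (n : ℕ) (x : Fin n → H) (p : ℝ) (hp : 1 ≤ p) :
    Erad n (fun σ => ‖∑ i, sgn (σ i) • x i‖ ^ p) ≤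
      (p * ∑ i, ‖x i‖ ^ 2) ^ (p / 2) := by
  classical
  have hp0 : (0 : ℝ) < p := lt_of_lt_of_le one_pos hp
  have hS0 : (0 : ℝ) ≤ ∑ i, ‖x i‖ ^ 2 := by positivity
  set m : ℕ := ⌈p / 2⌉₊ with hm
  have hm1 : 1 ≤ m := Nat.one_le_ceil_iff.mpr (by positivity)
  have hmR : (1 : ℝ) ≤ (m : ℝ) := by exact_mod_cast hm1
  have hp2m : p ≤ 2 * (m : ℝ) := by
    have := Nat.le_ceil (p / 2)
    rw [← hm] at this
    linarith
  have h2m : 2 * (m : ℝ) ≤ p + 2 := by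
    have := Nat.ceil_lt_add_one (show (0 : ℝ) ≤ p / 2 by positivity)
    rw [← hm] at this
    linarith
  have hcard : (0 : ℝ) < (Fintype.card (Fin n → Bool) : ℝ) := by
    exact_mod_cast Fintype.card_pos
  have hcard2 : (Fintype.card (Fin n → Bool) : ℝ) = 2 ^ n := by
    simp [Fintype.card_fun]
  set e : ℝ := 2 * (m : ℝ) / p with heq
  have he : 1 ≤ e := (one_le_div hp0).mpr hp2m
  have he0 : (0 : ℝ) < e := lt_of_lt_of_le one_pos he
  -- Jensen step
  have jensen := Real.arith_mean_le_rpow_mean (s := (Finset.univ : Finset (Fin n → Bool)))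
    (fun _ => (Fintype.card (Fin n → Bool) : ℝ)⁻¹)
    (fun σ => ‖∑ i, sgn (σ i) • x i‖ ^ p)
    (fun _ _ => by positivity)
    (by
      rw [Finset.sum_const, Finset.card_univ, nsmul_eq_mul]
      field_simp)
    (fun σ _ => by positivity) he
  have hze : ∀ σ : Fin n → Bool,
      (‖∑ i, sgn (σ i) • x i‖ ^ p) ^ e = ‖∑ i, sgn (σ i) • x i‖ ^ (2 * m) := by
    intro σ
    have hpe : ((2 * m : ℕ) : ℝ) = p * e := by
      rw [heq]
      push_cast
      field_simp
    rw [← Real.rpow_natCast ‖∑ i, sgn (σ i) • x i‖ (2 * m), hpe,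
      Real.rpow_mul (norm_nonneg _)]
  have hj2 : Erad n (fun σ => ‖∑ i, sgn (σ i) • x i‖ ^ p)
      ≤ (Erad n (fun σ => (‖∑ i, sgn (σ i) • x i‖ : ℝ) ^ (2 * m))) ^ (1 / e) := by
    rw [Erad_eq, Erad_eq]
    calc ∑ σ : Fin n → Bool, (Fintype.card (Fin n → Bool) : ℝ)⁻¹
          * ‖∑ i, sgn (σ i) • x i‖ ^ p
        ≤ (∑ σ : Fin n → Bool, (Fintype.card (Fin n → Bool) : ℝ)⁻¹
            * (‖∑ i, sgn (σ i) • x i‖ ^ p) ^ e) ^ (1 / e) := jensen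
      _ = (∑ σ : Fin n → Bool, (Fintype.card (Fin n → Bool) : ℝ)⁻¹
            * ‖∑ i, sgn (σ i) • x i‖ ^ (2 * m)) ^ (1 / e) := by
          congr 1
          exact Finset.sum_congr rfl fun σ _ => by rw [hze σ]
  -- moments bound
  have hmom : Erad n (fun σ => (‖∑ i, sgn (σ i) • x i‖ : ℝ) ^ (2 * m))
      ≤ (∏ j ∈ range m, (2 * (j : ℝ) + 1)) * (∑ i, ‖x i‖ ^ 2) ^ m := by
    rw [Erad]
    rw [div_le_iff₀ hcard, hcard2]
    exact moments x m
  have hmom0 : (0 : ℝ) ≤ Erad n (fun σ => (‖∑ i, sgn (σ i) • x i‖ : ℝ) ^ (2 * m)) := by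
    rw [Erad_eq]
    exact Finset.sum_nonneg fun σ _ => by positivity
  have hstep2 : (Erad n (fun σ => (‖∑ i, sgn (σ i) • x i‖ : ℝ) ^ (2 * m))) ^ (1 / e)
      ≤ ((p * ∑ i, ‖x i‖ ^ 2) ^ m) ^ (1 / e) := by
    apply Real.rpow_le_rpow hmom0 _ (by positivity)
    calc Erad n (fun σ => (‖∑ i, sgn (σ i) • x i‖ : ℝ) ^ (2 * m))
        ≤ (∏ j ∈ range m, (2 * (j : ℝ) + 1)) * (∑ i, ‖x i‖ ^ 2) ^ m := hmom
      _ ≤ p ^ m * (∑ i, ‖x i‖ ^ 2) ^ m :=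
          mul_le_mul_of_nonneg_right (prod_odd_le hp h2m) (pow_nonneg hS0 m)
      _ = (p * ∑ i, ‖x i‖ ^ 2) ^ m := (mul_pow _ _ _).symm
  have hfinal : ((p * ∑ i, ‖x i‖ ^ 2) ^ m) ^ (1 / e) = (p * ∑ i, ‖x i‖ ^ 2) ^ (p / 2) := by
    have hpS : (0 : ℝ) ≤ p * ∑ i, ‖x i‖ ^ 2 := by positivity
    rw [← Real.rpow_natCast (p * ∑ i, ‖x i‖ ^ 2) m, ← Real.rpow_mul hpS]
    congr 1
    rw [heq]
    have hm0 : (m : ℝ) ≠ 0 := by linarith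
    field_simp
  calc Erad n (fun σ => ‖∑ i, sgn (σ i) • x i‖ ^ p)
      ≤ (Erad n (fun σ => (‖∑ i, sgn (σ i) • x i‖ : ℝ) ^ (2 * m))) ^ (1 / e) := hj2
    _ ≤ ((p * ∑ i, ‖x i‖ ^ 2) ^ m) ^ (1 / e) := hstep2
    _ = (p * ∑ i, ‖x i‖ ^ 2) ^ (p / 2) := hfinal

end
end
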